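/- For a finite set S of n ≥ 3 points in general position in ℝ² and any q ∈ ℝ², the normalized spherical depth is at least two thirds of the normalized simplicial depth: SphD(q;S) ≥ (2/3)·SD(q;S). -/

import Mathlib

open scoped RealInnerProductSpace Classical

/-- Number of (unordered) pairs of points of `S` whose diameter disk contains `q`. -/
noncomputable def diskPairCount (q : EuclideanSpace ℝ (Fin 2))
    (S : Finset (EuclideanSpace ℝ (Fin 2))) : ℕ :=
  ((S.powersetCard 2).filter
    (fun P => ∃ x ∈ P, ∃ y ∈ P, x ≠ y ∧ ⟪x - q, y - q⟫ ≤ 0)).card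

/-- Number of triples of points of `S` whose closed triangle contains `q`. -/
noncomputable def triangleCount (q : EuclideanSpace ℝ (Fin 2))
    (S : Finset (EuclideanSpace ℝ (Fin 2))) : ℕ :=
  ((S.powersetCard 3).filter (fun T => q ∈ convexHull ℝ (T : Set _))).card

section Aux

variable {E : Type*} [NormedAddCommGroup E] [InnerProductSpace ℝ E]

private lemma aux_L00 {u v w : E} {a b c : ℝ} (ha : 0 ≤ a) (hb : 0 ≤ b) (hc : 0 ≤ c)
    (habc : a + b + c = 1) (heq : a • u + b • v + c • w = 0)
    (huv : 0 < ⟪u, v⟫) (huw : 0 < ⟪u, w⟫) : False := by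
  have h0 : ⟪u, a • u + b • v + c • w⟫ = 0 := by rw [heq, inner_zero_right]
  rw [inner_add_right, inner_add_right, real_inner_smul_right, real_inner_smul_right,
    real_inner_smul_right] at h0
  have hu : 0 ≤ ⟪u, u⟫ := real_inner_self_nonneg
  have hb0 : b = 0 := by nlinarith [mul_nonneg ha hu, mul_nonneg hc huw.le, mul_nonneg hb huv.le]
  have hc0 : c = 0 := by nlinarith [mul_nonneg ha hu, mul_nonneg hc huw.le]
  have ha1 : a = 1 := by linarith
  have huu : ⟪u, u⟫ = 0 := by rw [hb0, hc0, ha1] at h0; linarith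
  have hu0 : u = 0 := (@inner_self_eq_zero ℝ _ _ _ _ u).mp huu
  rw [hu0, inner_zero_left] at huv
  exact lt_irrefl 0 huv

private lemma aux_two_good {x y z q : E} (h : q ∈ convexHull ℝ ({x, y, z} : Set E))
    (hxy : x ≠ y) (hyz : y ≠ z) (hxz : x ≠ z) :
    (⟪x - q, y - q⟫ ≤ 0 ∧ ⟪y - q, z - q⟫ ≤ 0) ∨
    (⟪x - q, y - q⟫ ≤ 0 ∧ ⟪x - q, z - q⟫ ≤ 0) ∨
    (⟪y - q, z - q⟫ ≤ 0 ∧ ⟪x - q, z - q⟫ ≤ 0) := by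
  have hset : (({x, y, z} : Finset E) : Set E) = ({x, y, z} : Set E) := by simp
  rw [← hset, Finset.convexHull_eq] at h
  obtain ⟨wf, hw0, hw1, hcm⟩ := h
  rw [Finset.centerMass_eq_of_sum_1 _ _ hw1] at hcm
  have hxm : x ∉ ({y, z} : Finset E) := by simp [hxy, hxz]
  have hym : y ∉ ({z} : Finset E) := by simp [hyz]
  rw [Finset.sum_insert hxm, Finset.sum_insert hym, Finset.sum_singleton] at hcm
  rw [Finset.sum_insert hxm, Finset.sum_insert hym, Finset.sum_singleton] at hw1
  set a := wf x; set b := wf y; set c := wf z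
  have ha : 0 ≤ a := hw0 x (by simp)
  have hb : 0 ≤ b := hw0 y (by simp)
  have hc : 0 ≤ c := hw0 z (by simp)
  simp only [id] at hcm
  have heq : a • (x - q) + b • (y - q) + c • (z - q) = 0 := by
    have hrw : a • (x - q) + b • (y - q) + c • (z - q)
        = (a • x + (b • y + c • z)) - (a + (b + c)) • q := by
      simp [smul_sub, add_smul]; abel
    rw [hrw, hcm, hw1, one_smul, sub_self]
  have habc : a + b + c = 1 := by linarith
  rcases le_or_gt ⟪x - q, y - q⟫ 0 with h1 | h1
  · rcases le_or_gt ⟪y - q, z - q⟫ 0 with h2 | h2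
    · exact Or.inl ⟨h1, h2⟩
    · rcases le_or_gt ⟪x - q, z - q⟫ 0 with h3 | h3
      · exact Or.inr (Or.inl ⟨h1, h3⟩)
      · exact absurd heq (fun he => aux_L00 hc ha hb (by linarith)
          (by rw [← he]; abel) (by rwa [real_inner_comm]) (by rwa [real_inner_comm]))
  · rcases le_or_gt ⟪y - q, z - q⟫ 0 with h2 | h2
    · rcases le_or_gt ⟪x - q, z - q⟫ 0 with h3 | h3
      · exact Or.inr (Or.inr ⟨h2, h3⟩)
      · exact absurd heq (fun he => aux_L00 ha hb hc habc he h1 h3)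
    · exact absurd heq (fun he => aux_L00 hb ha hc (by linarith)
        (by rw [← he]; abel) (by rwa [real_inner_comm]) h2)

private lemma aux_pair_mem (q : E) (S T : Finset E) (hTS : T ⊆ S) {u v : E}
    (hu : u ∈ T) (hv : v ∈ T) (huv : u ≠ v) (hg : ⟪u - q, v - q⟫ ≤ 0) :
    ({u, v} : Finset E) ∈ ((S.powersetCard 2).filter
      (fun P => ∃ x ∈ P, ∃ y ∈ P, x ≠ y ∧ ⟪x - q, y - q⟫ ≤ 0)).filter (· ⊆ T) := by
  rw [Finset.mem_filter, Finset.mem_filter, Finset.mem_powersetCard]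
  refine ⟨⟨⟨?_, Finset.card_pair huv⟩, ⟨u, by simp, v, by simp, huv, hg⟩⟩, ?_⟩
  · exact Finset.insert_subset (hTS hu) (Finset.singleton_subset_iff.mpr (hTS hv))
  · exact Finset.insert_subset hu (Finset.singleton_subset_iff.mpr hv)

private lemma aux_key (S : Finset E) (q : E) (n : ℕ) (hn : S.card = n) :
    2 * ((S.powersetCard 3).filter (fun T : Finset E => q ∈ convexHull ℝ (↑T : Set E))).card ≤
    ((S.powersetCard 2).filter
      (fun P => ∃ x ∈ P, ∃ y ∈ P, x ≠ y ∧ ⟪x - q, y - q⟫ ≤ 0)).card * (n - 2) := by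
  set GP := (S.powersetCard 2).filter
      (fun P => ∃ x ∈ P, ∃ y ∈ P, x ≠ y ∧ ⟪x - q, y - q⟫ ≤ 0) with hGP
  set TT := (S.powersetCard 3).filter (fun T : Finset E => q ∈ convexHull ℝ (↑T : Set E)) with hTT
  have hA : ∀ T ∈ TT, 2 ≤ (GP.filter (· ⊆ T)).card := by
    intro T hT
    rw [hTT, Finset.mem_filter, Finset.mem_powersetCard] at hT
    obtain ⟨⟨hTS, hT3⟩, hq⟩ := hT
    obtain ⟨x, y, z, hxy, hxz, hyz, rfl⟩ := Finset.card_eq_three.mp hT3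
    have hx : x ∈ ({x, y, z} : Finset E) := by simp
    have hy : y ∈ ({x, y, z} : Finset E) := by simp
    have hz : z ∈ ({x, y, z} : Finset E) := by simp
    have hq' : q ∈ convexHull ℝ ({x, y, z} : Set E) := by
      have hco : (({x, y, z} : Finset E) : Set E) = ({x, y, z} : Set E) := by simp
      rwa [hco] at hq
    have hcard2 : ∀ P1 P2 : Finset E, P1 ∈ GP.filter (· ⊆ ({x, y, z} : Finset E)) →
        P2 ∈ GP.filter (· ⊆ ({x, y, z} : Finset E)) → P1 ≠ P2 →
        2 ≤ (GP.filter (· ⊆ ({x, y, z} : Finset E))).card := by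
      intro P1 P2 h1 h2 hne
      exact Finset.one_lt_card.mpr ⟨P1, h1, P2, h2, hne⟩
    rcases aux_two_good hq' hxy hyz hxz with ⟨g1, g2⟩ | ⟨g1, g2⟩ | ⟨g1, g2⟩
    · refine hcard2 {x, y} {y, z} (aux_pair_mem q S _ hTS hx hy hxy g1)
        (aux_pair_mem q S _ hTS hy hz hyz g2) ?_
      intro h
      have hxmem : x ∈ ({y, z} : Finset E) := h ▸ (by simp : x ∈ ({x, y} : Finset E))
      simp only [Finset.mem_insert, Finset.mem_singleton] at hxmem
      tauto
    · refine hcard2 {x, y} {x, z} (aux_pair_mem q S _ hTS hx hy hxy g1)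
        (aux_pair_mem q S _ hTS hx hz hxz g2) ?_
      intro h
      have hymem : y ∈ ({x, z} : Finset E) := h ▸ (by simp : y ∈ ({x, y} : Finset E))
      simp only [Finset.mem_insert, Finset.mem_singleton] at hymem
      tauto
    · refine hcard2 {y, z} {x, z} (aux_pair_mem q S _ hTS hy hz hyz g1)
        (aux_pair_mem q S _ hTS hx hz hxz g2) ?_
      intro h
      have hymem : y ∈ ({x, z} : Finset E) := h ▸ (by simp : y ∈ ({y, z} : Finset E))
      simp only [Finset.mem_insert, Finset.mem_singleton] at hymem
      tauto
  have hB : ∑ T ∈ TT, (GP.filter (· ⊆ T)).card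
      = ∑ P ∈ GP, (TT.filter (fun T => P ⊆ T)).card := by
    simp only [Finset.card_filter]
    exact Finset.sum_comm
  have hC : ∀ P ∈ GP, (TT.filter (fun T => P ⊆ T)).card ≤ n - 2 := by
    intro P hP
    rw [hGP, Finset.mem_filter, Finset.mem_powersetCard] at hP
    obtain ⟨⟨hPS, hP2⟩, -⟩ := hP
    have hsub : TT.filter (fun T => P ⊆ T) ⊆ (S \ P).image (fun z => insert z P) := by
      intro T hT
      rw [Finset.mem_filter, hTT, Finset.mem_filter, Finset.mem_powersetCard] at hT
      obtain ⟨⟨⟨hTS, hT3⟩, -⟩, hPT⟩ := hT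
      have hd : (T \ P).card = 1 := by rw [Finset.card_sdiff_of_subset hPT, hT3, hP2]
      obtain ⟨z, hz⟩ := Finset.card_eq_one.mp hd
      have hzT : z ∈ T \ P := hz ▸ Finset.mem_singleton_self z
      rw [Finset.mem_sdiff] at hzT
      have hins : insert z P ⊆ T := Finset.insert_subset hzT.1 hPT
      have hle : T.card ≤ (insert z P).card := by
        rw [Finset.card_insert_of_notMem hzT.2, hP2, hT3]
      rw [Finset.mem_image]
      exact ⟨z, Finset.mem_sdiff.mpr ⟨hTS hzT.1, hzT.2⟩,
        Finset.eq_of_subset_of_card_le hins hle⟩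
    calc (TT.filter (fun T => P ⊆ T)).card
        ≤ ((S \ P).image (fun z => insert z P)).card := Finset.card_le_card hsub
      _ ≤ (S \ P).card := Finset.card_image_le
      _ = n - 2 := by rw [Finset.card_sdiff_of_subset hPS, hn, hP2]
  calc 2 * TT.card = ∑ _T ∈ TT, 2 := by rw [Finset.sum_const, smul_eq_mul, mul_comm]
    _ ≤ ∑ T ∈ TT, (GP.filter (· ⊆ T)).card := Finset.sum_le_sum hA
    _ = ∑ P ∈ GP, (TT.filter (fun T => P ⊆ T)).card := hB
    _ ≤ ∑ _P ∈ GP, (n - 2) := Finset.sum_le_sum hC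
    _ = GP.card * (n - 2) := by rw [Finset.sum_const, smul_eq_mul]

end Aux

theorem sphericalDepth_ge_two_thirds_simplicialDepth
    (S : Finset (EuclideanSpace ℝ (Fin 2))) (n : ℕ) (hn : S.card = n) (h3 : 3 ≤ n)
    (hgp : ∀ x ∈ S, ∀ y ∈ S, ∀ z ∈ S, x ≠ y → y ≠ z → x ≠ z →
      ¬ Collinear ℝ ({x, y, z} : Set (EuclideanSpace ℝ (Fin 2))))
    (q : EuclideanSpace ℝ (Fin 2)) :
    (diskPairCount q S : ℝ) / (n.choose 2) ≥
      (2 / 3) * ((triangleCount q S : ℝ) / (n.choose 3)) := by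
  have htc : triangleCount q S = ((S.powersetCard 3).filter
      (fun T : Finset (EuclideanSpace ℝ (Fin 2)) =>
        q ∈ convexHull ℝ (↑T : Set (EuclideanSpace ℝ (Fin 2))))).card := by
    unfold triangleCount
    rw [bind_pure_comp, Finset.fmap_def, Finset.filter_image]
    convert Finset.card_image_of_injective _ Finset.coe_injective
  have key : 2 * triangleCount q S ≤ diskPairCount q S * (n - 2) := by
    rw [htc]; unfold diskPairCount; convert aux_key S q n hn using 4
  have hident : n.choose 3 * 3 = n.choose 2 * (n - 2) := Nat.choose_succ_right_eq n 2
  have c2pos : (0:ℝ) < (n.choose 2 : ℝ) := by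
    exact_mod_cast Nat.choose_pos (by omega : 2 ≤ n)
  have c3pos : (0:ℝ) < (n.choose 3 : ℝ) := by
    exact_mod_cast Nat.choose_pos h3
  rw [ge_iff_le]
  have hrw : (2 / 3 : ℝ) * ((triangleCount q S : ℝ) / (n.choose 3))
      = (2 * triangleCount q S) / (3 * n.choose 3) := by ring
  rw [hrw, div_le_div_iff₀ (by positivity) c2pos]
  have hkeyR : (2 * triangleCount q S : ℝ) ≤ (diskPairCount q S : ℝ) * ((n - 2 : ℕ) : ℝ) := by
    exact_mod_cast key
  have hidentR : (3 : ℝ) * (n.choose 3 : ℝ) = (n.choose 2 : ℝ) * ((n - 2 : ℕ) : ℝ) := by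
    exact_mod_cast (by linarith [hident] : 3 * n.choose 3 = n.choose 2 * (n - 2))
  calc (2 * (triangleCount q S : ℝ)) * (n.choose 2 : ℝ)
      ≤ ((diskPairCount q S : ℝ) * ((n - 2 : ℕ) : ℝ)) * (n.choose 2 : ℝ) := by
        have : (2 * (triangleCount q S : ℝ)) = ((2 * triangleCount q S : ℕ) : ℝ) := by
          push_cast; ring
        nlinarith [hkeyR, c2pos]
    _ = (diskPairCount q S : ℝ) * (3 * (n.choose 3 : ℝ)) := by rw [hidentR]; ring
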